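/- In the 1-planted REM with parameters (μ̂ log M, σ̂ √(log M / 2), M, 1), if the SNR γ = μ̂/σ̂ satisfies γ < 1, then the probability that the planted index achieves the maximum weight tends to 0 as M → ∞; hence exact recovery is impossible. -/

import Mathlib

open Real Filter MeasureTheory ProbabilityTheory Set

/-- Probability that the planted weight `E_l ~ N(μ̂ log M, σ̂² log M/2)` is at least
the maximum of `M` independent unbiased weights `N(0, σ̂² log M/2)` (1-planted REM). -/
lemma aux_exp_integral {a t m : ℝ} (ha : 0 < a) :
    ∫ x in Set.Ioi t, Real.exp (-(a * (x - m))) = a⁻¹ * Real.exp (-(a * (t - m))) := by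
  have hderiv : ∀ x ∈ Set.Ici t, HasDerivAt (fun x => -a⁻¹ * Real.exp (-(a * (x - m))))
      (Real.exp (-(a * (x - m)))) x := by
    intro x _
    have h1 : HasDerivAt (fun x : ℝ => -(a * (x - m))) (-a) x := by
      have h := (((hasDerivAt_id x).sub_const m).const_mul a).neg
      simp only [mul_one] at h
      exact h
    have h2 := (h1.exp).const_mul (-a⁻¹)
    refine h2.congr_deriv ?_
    rw [show -a⁻¹ * (Real.exp (-(a * (x - m))) * -a) = (a⁻¹ * a) * Real.exp (-(a * (x - m))) by ring, inv_mul_cancel₀ ha.ne', one_mul]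
  have hint : IntegrableOn (fun x => Real.exp (-(a * (x - m)))) (Set.Ioi t) := by
    have h := ((exp_neg_integrableOn_Ioi t ha).const_mul (Real.exp (a * m)))
    refine (integrableOn_congr_fun (fun x _ => ?_) measurableSet_Ioi).mpr h
    rw [← Real.exp_add]; ring_nf
  have htend : Tendsto (fun x => -a⁻¹ * Real.exp (-(a * (x - m)))) atTop (nhds 0) := by
    have h1 : Tendsto (fun x : ℝ => -(a * (x - m))) atTop atBot := by
      apply tendsto_neg_atTop_atBot.comp
      exact (tendsto_atTop_add_const_right atTop (-m) tendsto_id).const_mul_atTop ha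
    have := (Real.tendsto_exp_atBot.comp h1).const_mul (-a⁻¹)
    simpa using this
  have := integral_Ioi_of_hasDerivAt_of_tendsto' hderiv hint htend
  rw [this]; ring

lemma gauss_ub {m t v : ℝ} (hv : 0 < v) (ht : m < t) :
    ((gaussianReal m v.toNNReal) (Set.Ici t)).toReal ≤
      (Real.sqrt (2 * π * v))⁻¹ * (2 * v / (t - m)) * Real.exp (-(t - m) ^ 2 / (2 * v)) := by
  have hv' : v.toNNReal ≠ 0 := by simp [Real.toNNReal_eq_zero, not_le, hv]
  have hvc : ((v.toNNReal : ℝ)) = v := Real.coe_toNNReal v hv.le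
  rw [gaussianReal_apply_eq_integral _ hv', ENNReal.toReal_ofReal
    (setIntegral_nonneg measurableSet_Ici fun x _ => gaussianPDFReal_nonneg _ _ _)]
  rw [integral_Ici_eq_integral_Ioi]
  set a : ℝ := (t - m) / (2 * v) with ha_def
  have ha : 0 < a := div_pos (by linarith) (by linarith)
  have hint : IntegrableOn (fun x => Real.exp (-(a * (x - m)))) (Set.Ioi t) := by
    have h := (exp_neg_integrableOn_Ioi t ha).const_mul (Real.exp (a * m))
    refine (integrableOn_congr_fun (fun x _ => ?_) measurableSet_Ioi).mpr h
    rw [← Real.exp_add]; ring_nf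
  have hstep : ∫ x in Set.Ioi t, gaussianPDFReal m v.toNNReal x ≤
      ∫ x in Set.Ioi t, (Real.sqrt (2 * π * v))⁻¹ * Real.exp (-(a * (x - m))) := by
    apply setIntegral_mono_on
    · exact (integrable_gaussianPDFReal _ _).restrict
    · exact hint.const_mul _
    · exact measurableSet_Ioi
    · intro x hx
      rw [gaussianPDFReal, hvc]
      apply mul_le_mul_of_nonneg_left _ (by positivity)
      apply Real.exp_le_exp.mpr
      rw [ha_def, neg_div]
      have hxm : t - m ≤ x - m := by simp at hx; linarith
      have h1 : (t - m) * (x - m) ≤ (x - m) ^ 2 := by nlinarith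
      rw [neg_le_neg_iff, div_mul_eq_mul_div, div_le_div_iff₀ (by linarith) (by linarith)]
      nlinarith
  calc ∫ x in Set.Ioi t, gaussianPDFReal m v.toNNReal x
      ≤ ∫ x in Set.Ioi t, (Real.sqrt (2 * π * v))⁻¹ * Real.exp (-(a * (x - m))) := hstep
    _ = (Real.sqrt (2 * π * v))⁻¹ * (a⁻¹ * Real.exp (-(a * (t - m)))) := by
        rw [integral_const_mul, aux_exp_integral ha]
    _ = (Real.sqrt (2 * π * v))⁻¹ * (2 * v / (t - m)) * Real.exp (-(t - m) ^ 2 / (2 * v)) := by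
        rw [ha_def]
        have h1 : ((t - m) / (2 * v))⁻¹ = 2 * v / (t - m) := by
          rw [inv_div]
        have h2 : -((t - m) / (2 * v) * (t - m)) = -(t - m) ^ 2 / (2 * v) := by
          field_simp
        rw [h1, h2]; ring

lemma gauss_lb {t v : ℝ} (ht : 0 ≤ t) (hv : 0 < v) :
    (Real.sqrt (2 * π * v))⁻¹ * Real.exp (-(t + 1) ^ 2 / (2 * v)) ≤
      ((gaussianReal 0 v.toNNReal) (Set.Ioi t)).toReal := by
  have hv' : v.toNNReal ≠ 0 := by simp [Real.toNNReal_eq_zero, not_le, hv]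
  have hvc : ((v.toNNReal : ℝ)) = v := Real.coe_toNNReal v hv.le
  rw [gaussianReal_apply_eq_integral _ hv', ENNReal.toReal_ofReal
    (setIntegral_nonneg measurableSet_Ioi fun x _ => gaussianPDFReal_nonneg _ _ _)]
  have h1 : ∫ x in Set.Ioc t (t+1), gaussianPDFReal 0 v.toNNReal x ≤
      ∫ x in Set.Ioi t, gaussianPDFReal 0 v.toNNReal x := by
    apply setIntegral_mono_set (integrable_gaussianPDFReal _ _).restrict
    · exact ae_of_all _ fun x => gaussianPDFReal_nonneg _ _ _
    · exact HasSubset.Subset.eventuallyLE Set.Ioc_subset_Ioi_self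
  refine le_trans ?_ h1
  have h2 : ∀ x ∈ Set.Ioc t (t+1),
      (Real.sqrt (2 * π * v))⁻¹ * Real.exp (-(t + 1) ^ 2 / (2 * v)) ≤
        gaussianPDFReal 0 v.toNNReal x := by
    intro x hx
    rw [gaussianPDFReal, hvc]
    apply mul_le_mul_of_nonneg_left _ (by positivity)
    apply Real.exp_le_exp.mpr
    rw [neg_div, neg_div, neg_le_neg_iff, div_le_div_iff_of_pos_right (by linarith)]
    have hx1 : x ≤ t + 1 := hx.2
    have hx0 : 0 < x := lt_of_le_of_lt ht hx.1
    nlinarith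
  have h3 := setIntegral_mono_on (integrableOn_const
      (measure_Ioc_lt_top.ne)) (integrable_gaussianPDFReal 0 v.toNNReal).restrict
      measurableSet_Ioc h2
  refine le_trans (le_of_eq ?_) h3
  rw [setIntegral_const, Real.volume_real_Ioc]
  simp

noncomputable def premSuccess (μHat σHat : ℝ) (M : ℕ) : ℝ :=
  (((ProbabilityTheory.gaussianReal (μHat * Real.log M)
        (Real.toNNReal (σHat ^ 2 * Real.log M / 2))).prod
      (MeasureTheory.Measure.pi fun _ : Fin M =>
        ProbabilityTheory.gaussianReal 0 (Real.toNNReal (σHat ^ 2 * Real.log M / 2))))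
    {p : ℝ × (Fin M → ℝ) | ∀ i : Fin M, p.2 i ≤ p.1}).toReal

lemma split (μHat σHat t : ℝ) (M : ℕ) :
    premSuccess μHat σHat M ≤
      ((gaussianReal (μHat * Real.log M) (Real.toNNReal (σHat ^ 2 * Real.log M / 2)))
        (Set.Ici t)).toReal +
      (((gaussianReal 0 (Real.toNNReal (σHat ^ 2 * Real.log M / 2))) (Set.Iic t)).toReal) ^ M := by
  set μ1 := gaussianReal (μHat * Real.log M) (Real.toNNReal (σHat ^ 2 * Real.log M / 2)) with hμ1
  set g := gaussianReal (0 : ℝ) (Real.toNNReal (σHat ^ 2 * Real.log M / 2)) with hg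
  set ν := MeasureTheory.Measure.pi fun _ : Fin M => g with hν
  have hsub : {p : ℝ × (Fin M → ℝ) | ∀ i : Fin M, p.2 i ≤ p.1} ⊆
      (Set.Ici t ×ˢ Set.univ) ∪ (Set.univ ×ˢ Set.univ.pi fun _ : Fin M => Set.Iic t) := by
    intro p hp
    rcases le_or_gt t p.1 with h | h
    · exact Or.inl ⟨h, Set.mem_univ _⟩
    · exact Or.inr ⟨Set.mem_univ _, fun i _ => le_of_lt (lt_of_le_of_lt (hp i) h)⟩
  have hb : (μ1.prod ν) {p : ℝ × (Fin M → ℝ) | ∀ i : Fin M, p.2 i ≤ p.1} ≤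
      μ1 (Set.Ici t) + g (Set.Iic t) ^ M := by
    refine le_trans (measure_mono hsub) (le_trans (measure_union_le _ _) (le_of_eq ?_))
    rw [Measure.prod_prod, Measure.prod_prod, measure_univ, measure_univ, mul_one, one_mul,
      Measure.pi_pi]
    simp
  have hfin : μ1 (Set.Ici t) + g (Set.Iic t) ^ M ≠ ⊤ := by
    refine ENNReal.add_ne_top.mpr ⟨measure_ne_top _ _, ?_⟩
    exact ENNReal.pow_ne_top (measure_ne_top _ _)
  calc premSuccess μHat σHat M ≤ (μ1 (Set.Ici t) + g (Set.Iic t) ^ M).toReal :=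
        ENNReal.toReal_mono hfin hb
    _ = (μ1 (Set.Ici t)).toReal + ((g (Set.Iic t)).toReal) ^ M := by
        rw [ENNReal.toReal_add (measure_ne_top _ _) (ENNReal.pow_ne_top (measure_ne_top _ _)),
          ENNReal.toReal_pow]

set_option maxHeartbeats 1000000 in
/-- in the 1-planted REM with parameters
`(μ̂ log M, σ̂ √(log M/2), M, 1)`, if `γ = μ̂/σ̂ < 1` then the probability that the
planted index achieves the maximum weight tends to `0` as `M → ∞`. -/
theorem stmt6 (μHat σHat : ℝ) (hμ : 0 < μHat) (hσ : 0 < σHat)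
    (hγ : μHat / σHat < 1) :
    Tendsto (fun M : ℕ => premSuccess μHat σHat M) atTop (nhds 0) := by
  have hms : μHat < σHat := by
    have h := (div_lt_one hσ).mp hγ; linarith
  obtain ⟨c, hc_def⟩ : ∃ x : ℝ, x = (μHat + σHat) / 2 := ⟨_, rfl⟩
  have hc0 : 0 < c := by rw [hc_def]; linarith
  have hμc : μHat < c := by rw [hc_def]; linarith
  have hcσ : c < σHat := by rw [hc_def]; linarith
  obtain ⟨δ, hδ_def⟩ : ∃ x : ℝ, x = c - μHat := ⟨_, rfl⟩
  have hδ : 0 < δ := by rw [hδ_def]; linarith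
  obtain ⟨α, hα_def⟩ : ∃ x : ℝ, x = 1 - c ^ 2 / σHat ^ 2 := ⟨_, rfl⟩
  have hα : 0 < α := by
    have h1 : c ^ 2 / σHat ^ 2 < 1 := (div_lt_one (by positivity)).mpr (by nlinarith)
    rw [hα_def]; linarith
  obtain ⟨ρ, hρ_def⟩ : ∃ x : ℝ, x = δ ^ 2 / σHat ^ 2 := ⟨_, rfl⟩
  have hρ : 0 < ρ := by rw [hρ_def]; positivity
  obtain ⟨C2, hC2_def⟩ : ∃ x : ℝ, x = Real.log (π * σHat ^ 2) / 2 + 2 * c / σHat ^ 2 + 1 / σHat ^ 2 := ⟨_, rfl⟩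
  have tendstoLog : Tendsto (fun M : ℕ => Real.log M) atTop atTop :=
    Real.tendsto_log_atTop.comp tendsto_natCast_atTop_atTop
  obtain ⟨ε, hε_def⟩ : ∃ f : ℕ → ℝ, f = fun M : ℕ => (Real.sqrt (2 * π * (σHat ^ 2 * Real.log M / 2)))⁻¹ *
      Real.exp (-(c * Real.log M + 1) ^ 2 / (2 * (σHat ^ 2 * Real.log M / 2))) := ⟨_, rfl⟩
  have hub : ∀ᶠ M : ℕ in atTop, premSuccess μHat σHat M ≤
      σHat ^ 2 / δ * Real.exp (-(ρ * Real.log M)) + Real.exp (-((M : ℝ) * ε M)) := by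
    filter_upwards [tendstoLog.eventually_ge_atTop 1,
      tendstoLog.eventually_ge_atTop (1 / (π * σHat ^ 2))] with M hL1 hLK
    set L := Real.log M with hL_def
    have hL0 : (0 : ℝ) < L := lt_of_lt_of_le one_pos hL1
    have hv : 0 < σHat ^ 2 * L / 2 := by positivity
    refine le_trans (split μHat σHat (c * L) M) (add_le_add ?_ ?_)
    · refine le_trans (gauss_ub hv (by nlinarith)) ?_
      have e1 : c * L - μHat * L = δ * L := by rw [hδ_def]; ring
      have e2 : 2 * (σHat ^ 2 * L / 2) / (c * L - μHat * L) = σHat ^ 2 / δ := by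
        rw [e1, show 2 * (σHat ^ 2 * L / 2) = σHat ^ 2 * L from by ring,
          mul_div_mul_right _ _ hL0.ne']
      have e3 : -(c * L - μHat * L) ^ 2 / (2 * (σHat ^ 2 * L / 2)) = -(ρ * L) := by
        rw [e1, hρ_def]; field_simp
      rw [e2, e3]
      have hK : (Real.sqrt (2 * π * (σHat ^ 2 * L / 2)))⁻¹ ≤ 1 := by
        have h1 : (1 : ℝ) ≤ 2 * π * (σHat ^ 2 * L / 2) := by
          have h2 := (div_le_iff₀ (by positivity : (0:ℝ) < π * σHat ^ 2)).mp hLK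
          nlinarith
        have h2 : (1 : ℝ) ≤ Real.sqrt (2 * π * (σHat ^ 2 * L / 2)) := by
          rw [show (1:ℝ) = Real.sqrt 1 from (Real.sqrt_one).symm]
          exact Real.sqrt_le_sqrt h1
        exact inv_le_one_of_one_le₀ h2
      have h3 : (Real.sqrt (2 * π * (σHat ^ 2 * L / 2)))⁻¹ * (σHat ^ 2 / δ) ≤
          1 * (σHat ^ 2 / δ) := mul_le_mul_of_nonneg_right hK (by positivity)
      calc (Real.sqrt (2 * π * (σHat ^ 2 * L / 2)))⁻¹ * (σHat ^ 2 / δ) *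
            Real.exp (-(ρ * L)) ≤ 1 * (σHat ^ 2 / δ) * Real.exp (-(ρ * L)) :=
            mul_le_mul_of_nonneg_right h3 (Real.exp_pos _).le
        _ = σHat ^ 2 / δ * Real.exp (-(ρ * L)) := by ring
    · set g := gaussianReal (0 : ℝ) (Real.toNNReal (σHat ^ 2 * L / 2)) with hg_def
      have hF0 : (0 : ℝ) ≤ (g (Set.Iic (c * L))).toReal := ENNReal.toReal_nonneg
      have hcompl : (g (Set.Iic (c * L))).toReal = 1 - (g (Set.Ioi (c * L))).toReal := by
        have h1 : g (Set.Iic (c * L)) = 1 - g (Set.Ioi (c * L)) := by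
          rw [← Set.compl_Ioi]
          exact prob_compl_eq_one_sub measurableSet_Ioi
        rw [h1, ENNReal.toReal_sub_of_le prob_le_one ENNReal.one_ne_top, ENNReal.toReal_one]
      have hεle := gauss_lb (t := c * L) (v := σHat ^ 2 * L / 2) (by positivity) hv
      have hεM : ε M = (Real.sqrt (2 * π * (σHat ^ 2 * L / 2)))⁻¹ *
          Real.exp (-(c * L + 1) ^ 2 / (2 * (σHat ^ 2 * L / 2))) := by
        simp only [hε_def, ← hL_def]
      have hF : (g (Set.Iic (c * L))).toReal ≤ 1 - ε M := by
        rw [hcompl, hεM]; linarith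
      have hε1 : (0 : ℝ) ≤ 1 - ε M := le_trans hF0 hF
      calc (g (Set.Iic (c * L))).toReal ^ M ≤ (1 - ε M) ^ M := pow_le_pow_left₀ hF0 hF M
        _ ≤ Real.exp (-(ε M)) ^ M :=
            pow_le_pow_left₀ hε1 (by linarith [Real.add_one_le_exp (-(ε M))]) M
        _ = Real.exp (-((M : ℝ) * ε M)) := by rw [← Real.exp_nat_mul, mul_neg]
  have hlogbd : ∀ᶠ x : ℝ in atTop, Real.log x ≤ α * x := by
    filter_upwards [Real.isLittleO_log_id_atTop.def hα, eventually_ge_atTop (0 : ℝ)]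
      with x hx hx0
    calc Real.log x ≤ ‖Real.log x‖ := le_abs_self _
      _ ≤ α * ‖id x‖ := hx
      _ = α * x := by rw [id, Real.norm_eq_abs, abs_of_nonneg hx0]
  have hT : Tendsto (fun M : ℕ => (M : ℝ) * ε M) atTop atTop := by
    have htarget : Tendsto (fun M : ℕ => Real.exp (α / 2 * Real.log M - C2)) atTop atTop := by
      have h1 : Tendsto (fun M : ℕ => α / 2 * Real.log M - C2) atTop atTop := by
        have := tendsto_atTop_add_const_right atTop (-C2)
          (tendstoLog.const_mul_atTop (half_pos hα))
        simpa [sub_eq_add_neg] using this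
      exact Real.tendsto_exp_atTop.comp h1
    apply tendsto_atTop_mono' atTop ?_ htarget
    filter_upwards [tendstoLog.eventually_ge_atTop 1, tendstoLog.eventually hlogbd,
      eventually_ge_atTop 1] with M hL1 hE2 hM1
    set L := Real.log M with hL_def
    have hL0 : (0 : ℝ) < L := lt_of_lt_of_le one_pos hL1
    have hMpos : (0 : ℝ) < (M : ℝ) := by exact_mod_cast Nat.pos_of_ne_zero (by omega)
    have hMexp : (M : ℝ) = Real.exp L := (Real.exp_log hMpos).symm
    have hw0 : (0 : ℝ) < π * σHat ^ 2 * L := by positivity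
    have hsqrt : (Real.sqrt (2 * π * (σHat ^ 2 * L / 2)))⁻¹ =
        Real.exp (-(Real.log (π * σHat ^ 2 * L) / 2)) := by
      rw [show 2 * π * (σHat ^ 2 * L / 2) = π * σHat ^ 2 * L from by ring,
        ← Real.log_sqrt hw0.le, Real.exp_neg, Real.exp_log (Real.sqrt_pos.mpr hw0)]
    have hεM : ε M = Real.exp (-(Real.log (π * σHat ^ 2 * L) / 2)) *
        Real.exp (-(c * L + 1) ^ 2 / (σHat ^ 2 * L)) := by
      simp only [hε_def, ← hL_def]
      rw [hsqrt, show 2 * (σHat ^ 2 * L / 2) = σHat ^ 2 * L from by ring]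
    rw [hMexp, hεM, ← Real.exp_add, ← Real.exp_add]
    apply Real.exp_le_exp.mpr
    have hlogsplit : Real.log (π * σHat ^ 2 * L) = Real.log (π * σHat ^ 2) + Real.log L :=
      Real.log_mul (by positivity) hL0.ne'
    have hexpand : (c * L + 1) ^ 2 / (σHat ^ 2 * L) =
        c ^ 2 / σHat ^ 2 * L + 2 * c / σHat ^ 2 + 1 / (σHat ^ 2 * L) := by
      field_simp; ring
    have h1L : 1 / (σHat ^ 2 * L) ≤ 1 / σHat ^ 2 := by
      apply one_div_le_one_div_of_le (by positivity); nlinarith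
    have hαL : α * L = L - c ^ 2 / σHat ^ 2 * L := by rw [hα_def]; ring
    have hE2' : Real.log L ≤ α * L := hE2
    have hdiv : -(c * L + 1) ^ 2 / (σHat ^ 2 * L) = -((c * L + 1) ^ 2 / (σHat ^ 2 * L)) := by
      ring
    rw [hdiv, hexpand]
    linarith [hC2_def, hlogsplit, h1L, hαL, hE2']
  have p1 : Tendsto (fun M : ℕ => σHat ^ 2 / δ * Real.exp (-(ρ * Real.log M))) atTop (nhds 0) := by
    have t1 : Tendsto (fun M : ℕ => -(ρ * Real.log M)) atTop atBot :=
      tendsto_neg_atTop_atBot.comp (tendstoLog.const_mul_atTop hρ)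
    have := (Real.tendsto_exp_atBot.comp t1).const_mul (σHat ^ 2 / δ)
    simpa using this
  have p2 : Tendsto (fun M : ℕ => Real.exp (-((M : ℝ) * ε M))) atTop (nhds 0) :=
    Real.tendsto_exp_atBot.comp (tendsto_neg_atTop_atBot.comp hT)
  have hlim := p1.add p2
  rw [add_zero] at hlim
  exact squeeze_zero' (Eventually.of_forall fun M => ENNReal.toReal_nonneg) hub hlim
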